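/- Let Q be the polyhedral complex {v ∈ |Σ| : ψ(v) ≤ 1} in N_ℝ and f_Q(m) = #(mQ ∩ N) the number of lattice points in the m-th dilate. Then f_Q(m) is a polynomial in m of degree d, and there is a polynomial δ_Q(t) of degree at most d with 1 + Σ_{m≥1} f_Q(m) t^m = δ_Q(t)/(1−t)^{d+1}. -/

import Mathlib

/-- The cone spanned by the rays indexed by `σ`. -/
def coneOf (d r : ℕ) (v : Fin r → Fin d → ℤ) (σ : Finset (Fin r)) : Set (Fin d → ℝ) :=
  {x | ∃ c : Fin r → ℝ, (∀ i, 0 ≤ c i) ∧ (∀ i ∉ σ, c i = 0) ∧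
    ∀ j, x j = ∑ i, c i * (v i j : ℝ)}

open Finset

/-- tuples supported on `σ` with sum at most `M`. -/
noncomputable def sumLE {ι : Type*} [DecidableEq ι] (σ : Finset ι) (M : ℕ) :
    Finset (ι → ℕ) := by
  classical exact (Finset.range (M + 1)).biUnion (fun j => σ.piAntidiag j)

lemma mem_sumLE {ι : Type*} [DecidableEq ι] (σ : Finset ι) (M : ℕ) (n : ι → ℕ) :
    n ∈ sumLE σ M ↔ (∀ i ∉ σ, n i = 0) ∧ ∑ i ∈ σ, n i ≤ M := by
  classical
  simp only [sumLE, mem_biUnion, mem_range, Finset.mem_piAntidiag]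
  constructor
  · rintro ⟨j, hj, rfl, h⟩
    refine ⟨fun i hi => ?_, Nat.lt_succ_iff.mp hj⟩
    by_contra h'
    exact hi (h i h')
  · rintro ⟨h1, h2⟩
    refine ⟨∑ i ∈ σ, n i, Nat.lt_succ_iff.mpr h2, rfl, fun i hi => ?_⟩
    by_contra h'
    exact hi (h1 i h')

lemma card_sumLE {ι : Type*} [DecidableEq ι] (σ : Finset ι) :
    ∀ M : ℕ, (sumLE σ M).card = (M + σ.card).choose σ.card := by
  classical
  induction σ using Finset.induction_on with
  | empty =>
    intro M
    have h : sumLE (∅ : Finset ι) M = {fun _ => 0} := by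
      ext n
      simp only [mem_sumLE, Finset.notMem_empty, Finset.sum_empty, Nat.zero_le, and_true,
        Finset.mem_singleton]
      constructor
      · intro h
        funext i
        exact h i (by simp)
      · rintro rfl i _
        rfl
    simp [h]
  | @insert a σ ha ih =>
    intro M
    have hmem : ∀ n ∈ sumLE (insert a σ) M, n a ∈ Finset.range (M + 1) := by
      intro n hn
      rw [mem_sumLE] at hn
      rw [Finset.sum_insert ha] at hn
      exact Finset.mem_range.mpr (Nat.lt_succ_iff.mpr (le_trans (Nat.le_add_right _ _) hn.2))
    rw [Finset.card_eq_sum_card_fiberwise hmem]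
    have hfib : ∀ j ∈ Finset.range (M + 1),
        ((sumLE (insert a σ) M).filter (fun n => n a = j)).card = (sumLE σ (M - j)).card := by
      intro j hj
      rw [Finset.mem_range, Nat.lt_succ_iff] at hj
      apply Finset.card_bij (fun n _ => Function.update n a 0)
      · intro n hn
        simp only [Finset.mem_filter, mem_sumLE] at hn
        obtain ⟨⟨h1, h2⟩, h3⟩ := hn
        rw [Finset.sum_insert ha, h3] at h2
        rw [mem_sumLE]
        constructor
        · intro i hi
          by_cases hia : i = a
          · subst hia; simp [Function.update_self]
          · rw [Function.update_of_ne hia]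
            exact h1 i (by simp only [Finset.mem_insert]; push_neg; exact ⟨hia, hi⟩)
        · have : ∑ i ∈ σ, Function.update n a 0 i = ∑ i ∈ σ, n i := by
            apply Finset.sum_congr rfl
            intro i hi
            have hne : i ≠ a := by
              intro h
              subst h
              exact ha hi
            exact Function.update_of_ne hne 0 n
          rw [this]
          omega
      · intro n1 hn1 n2 hn2 he
        simp only [Finset.mem_filter] at hn1 hn2
        funext i
        by_cases hia : i = a
        · subst hia; rw [hn1.2, hn2.2]
        · have := congrFun he i
          rwa [Function.update_of_ne hia, Function.update_of_ne hia] at this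
      · intro n hn
        rw [mem_sumLE] at hn
        refine ⟨Function.update n a j, ?_, ?_⟩
        · simp only [Finset.mem_filter, mem_sumLE, Function.update_self]
          refine ⟨⟨fun i hi => ?_, ?_⟩, by simp⟩
          · have hne : i ≠ a := by
              intro h
              subst h
              exact hi (Finset.mem_insert_self i σ)
            rw [Function.update_of_ne hne]
            exact hn.1 i (fun hmem' => hi (Finset.mem_insert_of_mem hmem'))
          · rw [Finset.sum_insert ha, Function.update_self]
            have hupd : ∑ i ∈ σ, Function.update n a j i = ∑ i ∈ σ, n i := by
              apply Finset.sum_congr rfl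
              intro i hi
              have hne : i ≠ a := by
                intro h
                subst h
                exact ha hi
              exact Function.update_of_ne hne j n
            rw [hupd]
            omega
        · funext i
          by_cases hia : i = a
          · rw [hia, Function.update_self]
            exact (hn.1 a ha).symm
          · rw [Function.update_of_ne hia, Function.update_of_ne hia]
    rw [Finset.sum_congr rfl hfib]
    simp only [fun j => ih (M - j)]
    have : ∑ j ∈ Finset.range (M + 1), (M - j + σ.card).choose σ.card
        = ∑ j ∈ Finset.range (M + 1), (j + σ.card).choose σ.card := by
      rw [← Finset.sum_range_reflect]
      apply Finset.sum_congr rfl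
      intro j hj
      rw [Finset.mem_range, Nat.lt_succ_iff] at hj
      congr 2
      omega
    rw [this]
    have h2 : ∑ j ∈ Finset.range (M + 1), (j + σ.card).choose σ.card
        = ∑ i ∈ Finset.Icc σ.card (M + σ.card), i.choose σ.card := by
      apply Finset.sum_nbij' (fun j => j + σ.card) (fun i => i - σ.card)
      · intro j hj
        rw [Finset.mem_range, Nat.lt_succ_iff] at hj
        rw [Finset.mem_Icc]
        omega
      · intro i hi
        rw [Finset.mem_Icc] at hi
        rw [Finset.mem_range]
        omega
      · intro j hj
        omega
      · intro i hi
        rw [Finset.mem_Icc] at hi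
        omega
      · intro j hj
        rfl
    rw [h2, Nat.sum_Icc_choose, Finset.card_insert_of_notMem ha]
    rw [Nat.add_assoc]

/-- number of lattice translates. -/
def cnt (k s m : ℕ) : ℕ := if k ≤ m then (m - k + s).choose s else 0

noncomputable def pol (k s : ℕ) : Polynomial ℚ :=
  Polynomial.C ((s.factorial : ℚ)⁻¹)
    * ∏ j ∈ Finset.range s, (Polynomial.X + Polynomial.C ((j : ℚ) + 1 - (k : ℚ)))

lemma prod_asc (M : ℕ) : ∀ s : ℕ,
    ∏ j ∈ Finset.range s, ((M : ℚ) + (j : ℚ) + 1) = ((M + s).factorial : ℚ) / (M.factorial : ℚ)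
  | 0 => by
    have hM : (M.factorial : ℚ) ≠ 0 := Nat.cast_ne_zero.mpr (Nat.factorial_ne_zero M)
    simp [div_self hM]
  | s + 1 => by
    rw [Finset.prod_range_succ, prod_asc M s]
    have h : ((M + s + 1).factorial : ℚ) = ((M + s).factorial : ℚ) * ((M : ℚ) + s + 1) := by
      rw [Nat.factorial_succ]
      push_cast
      ring
    have hM : (M.factorial : ℚ) ≠ 0 := Nat.cast_ne_zero.mpr (Nat.factorial_ne_zero M)
    rw [show M + (s + 1) = M + s + 1 from rfl, h]
    field_simp

lemma pol_eval (k s : ℕ) (hk : k ≤ s) (m : ℕ) :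
    (pol k s).eval (m : ℚ) = (cnt k s m : ℚ) := by
  rw [pol, cnt]
  simp only [Polynomial.eval_mul, Polynomial.eval_C, Polynomial.eval_prod, Polynomial.eval_add,
    Polynomial.eval_X]
  by_cases hkm : k ≤ m
  · rw [if_pos hkm]
    have hrw : ∀ j ∈ Finset.range s, (m : ℚ) + ((j : ℚ) + 1 - (k : ℚ))
        = ((m - k : ℕ) : ℚ) + (j : ℚ) + 1 := by
      intro j _
      rw [Nat.cast_sub hkm]
      ring
    rw [Finset.prod_congr rfl hrw, prod_asc]
    have hchoose := Nat.choose_mul_factorial_mul_factorial (Nat.le_add_left s (m - k))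
    rw [Nat.add_sub_cancel] at hchoose
    have h2 : (((m - k + s).choose s : ℚ)) * (s.factorial : ℚ) * ((m - k).factorial : ℚ)
        = ((m - k + s).factorial : ℚ) := by
      exact_mod_cast congrArg (fun x : ℕ => (x : ℚ)) hchoose
    have hs : (s.factorial : ℚ) ≠ 0 := Nat.cast_ne_zero.mpr (Nat.factorial_ne_zero s)
    have hmk : ((m - k).factorial : ℚ) ≠ 0 := Nat.cast_ne_zero.mpr (Nat.factorial_ne_zero _)
    rw [inv_mul_eq_div, div_div, eq_comm, eq_div_iff (mul_ne_zero hmk hs)]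
    linear_combination h2
  · rw [if_neg hkm]
    push_neg at hkm
    have h1 : k - m - 1 ∈ Finset.range s := by
      rw [Finset.mem_range]
      omega
    have hz : (m : ℚ) + (((k - m - 1 : ℕ) : ℚ) + 1 - (k : ℚ)) = 0 := by
      have he : (k - m - 1 : ℕ) = k - (m + 1) := by omega
      rw [he, Nat.cast_sub (by omega : m + 1 ≤ k)]
      push_cast
      ring
    rw [Finset.prod_eq_zero h1 hz]
    simp

lemma pol_natDegree_le (k s : ℕ) : (pol k s).natDegree ≤ s := by
  rw [pol]
  refine le_trans (Polynomial.natDegree_mul_le) ?_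
  rw [Polynomial.natDegree_C, zero_add]
  refine le_trans (Polynomial.natDegree_prod_le _ _) ?_
  calc ∑ j ∈ Finset.range s, (Polynomial.X + Polynomial.C ((j : ℚ) + 1 - k)).natDegree
      ≤ ∑ _j ∈ Finset.range s, 1 := by
        refine Finset.sum_le_sum fun j _ => ?_
        exact le_of_eq (Polynomial.natDegree_X_add_C _)
    _ = s := by simp

lemma pol_coeff (k s n : ℕ) (hn : s ≤ n) :
    (pol k s).coeff n = if n = s then (s.factorial : ℚ)⁻¹ else 0 := by
  have hmonic : (∏ j ∈ Finset.range s,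
      (Polynomial.X + Polynomial.C ((j : ℚ) + 1 - (k : ℚ)))).Monic :=
    Polynomial.monic_prod_of_monic _ _ fun j _ => Polynomial.monic_X_add_C _
  have hdeg : (∏ j ∈ Finset.range s,
      (Polynomial.X + Polynomial.C ((j : ℚ) + 1 - (k : ℚ)))).natDegree = s := by
    rw [Polynomial.natDegree_prod _ _ (fun j _ => (Polynomial.monic_X_add_C _).ne_zero)]
    simp only [Polynomial.natDegree_X_add_C, Finset.sum_const, Finset.card_range, smul_eq_mul,
      mul_one]
  rw [pol, Polynomial.coeff_C_mul]
  rcases eq_or_lt_of_le hn with h | h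
  · subst h
    rw [if_pos rfl]
    have hc := hmonic.coeff_natDegree
    rw [hdeg] at hc
    rw [hc, mul_one]
  · rw [if_neg (by omega)]
    rw [Polynomial.coeff_eq_zero_of_natDegree_lt (by rw [hdeg]; exact h), mul_zero]

lemma cnt_series (k s : ℕ) :
    (PowerSeries.mk fun m => (cnt k s m : ℚ))
      = PowerSeries.X ^ k * PowerSeries.mk (fun n => ((s + n).choose s : ℚ)) := by
  ext m
  rw [PowerSeries.coeff_mk]
  by_cases hkm : k ≤ m
  · have hm : m = (m - k) + k := by omega
    rw [hm, PowerSeries.coeff_X_pow_mul, PowerSeries.coeff_mk]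
    rw [cnt, if_pos (by omega : k ≤ m - k + k)]
    congr 2
    omega
  · rw [cnt, if_neg hkm]
    rw [PowerSeries.coeff_X_pow_mul' ]
    rw [if_neg (by omega)]
    simp

lemma cnt_series_mul (k s D : ℕ) (hs : s ≤ D) :
    (PowerSeries.mk fun m => (cnt k s m : ℚ)) * (1 - PowerSeries.X) ^ (D + 1)
      = PowerSeries.X ^ k * (1 - PowerSeries.X) ^ (D - s) := by
  rw [cnt_series]
  have hpow : (D + 1) = (s + 1) + (D - s) := by omega
  have key := PowerSeries.mk_add_choose_mul_one_sub_pow_eq_one ℚ s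
  calc PowerSeries.X ^ k * (PowerSeries.mk fun n => ((s + n).choose s : ℚ))
        * (1 - PowerSeries.X) ^ (D + 1)
      = PowerSeries.X ^ k * (((PowerSeries.mk fun n => ((s + n).choose s : ℚ))
          * (1 - PowerSeries.X) ^ (s + 1)) * (1 - PowerSeries.X) ^ (D - s)) := by
        rw [hpow, pow_add]
        ring
    _ = PowerSeries.X ^ k * (1 - PowerSeries.X) ^ (D - s) := by
        rw [key, one_mul]

def castZ {d : ℕ} (w : Fin d → ℤ) : Fin d → ℝ := fun j => (w j : ℝ)

/-- strict (relative-interior) membership data. -/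
def Strict {d r : ℕ} (v : Fin r → Fin d → ℤ) (σ : Finset (Fin r)) (x : Fin d → ℝ) : Prop :=
  ∃ c : Fin r → ℝ, (∀ i ∉ σ, c i = 0) ∧ (∀ i ∈ σ, 0 < c i) ∧
    ∀ j, x j = ∑ i, c i * (v i j : ℝ)

lemma coeff_unique {d r : ℕ} {v : Fin r → Fin d → ℤ} {σ : Finset (Fin r)}
    (hind : LinearIndependent ℝ (fun i : σ => fun j => (v i j : ℝ)))
    {c c' : Fin r → ℝ} (hc : ∀ i ∉ σ, c i = 0) (hc' : ∀ i ∉ σ, c' i = 0)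
    (h : ∀ j, ∑ i, c i * (v i j : ℝ) = ∑ i, c' i * (v i j : ℝ)) : c = c' := by
  classical
  have key : ∑ i : σ, ((c i - c' i) • (fun j => (v (i : Fin r) j : ℝ))) = 0 := by
    have h1 : ∑ i : σ, ((c i - c' i) • (fun j => (v (i : Fin r) j : ℝ)))
        = ∑ i ∈ σ, ((c i - c' i) • (fun j => (v i j : ℝ))) := by
      exact Finset.sum_coe_sort σ (fun i => (c i - c' i) • (fun j => (v i j : ℝ)))
    rw [h1]
    have h2 : ∑ i ∈ σ, ((c i - c' i) • (fun j => (v i j : ℝ)))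
        = ∑ i, ((c i - c' i) • (fun j => (v i j : ℝ))) := by
      apply Finset.sum_subset (Finset.subset_univ σ)
      intro i _ hi
      rw [hc i hi, hc' i hi]
      simp
    rw [h2]
    funext j
    simp only [Finset.sum_apply, Pi.smul_apply, smul_eq_mul, Pi.zero_apply]
    have := h j
    rw [← sub_eq_zero] at this
    rw [← this, ← Finset.sum_sub_distrib]
    apply Finset.sum_congr rfl
    intro i _
    ring
  have hz := Fintype.linearIndependent_iff.mp hind (fun i => c i - c' i) key
  funext i
  by_cases hi : i ∈ σ
  · have := hz ⟨i, hi⟩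
    simpa [sub_eq_zero] using this
  · rw [hc i hi, hc' i hi]

lemma psi_formula {d r : ℕ} {v : Fin r → Fin d → ℤ} {a : Fin r → ℕ} (ha : ∀ i, 0 < a i)
    {ψ : (Fin d → ℝ) → ℝ} {σ : Finset (Fin r)}
    (hlin : ∃ ℓ : (Fin d → ℝ) →ₗ[ℝ] ℝ, ∀ x ∈ coneOf d r v σ, ψ x = ℓ x)
    (hψb : ∀ i, ψ (fun j => (a i : ℝ) * (v i j : ℝ)) = 1)
    {x : Fin d → ℝ} {c : Fin r → ℝ} (hpos : ∀ i, 0 ≤ c i) (hsupp : ∀ i ∉ σ, c i = 0)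
    (hrep : ∀ j, x j = ∑ i, c i * (v i j : ℝ)) :
    ψ x = ∑ i, c i / (a i : ℝ) := by
  classical
  obtain ⟨ℓ, hℓ⟩ := hlin
  have hx : x ∈ coneOf d r v σ := ⟨c, hpos, hsupp, hrep⟩
  have hxe : x = ∑ i, c i • (fun j => (v i j : ℝ)) := by
    funext j
    rw [hrep j]
    simp [Finset.sum_apply]
  rw [hℓ x hx, hxe, map_sum]
  apply Finset.sum_congr rfl
  intro i _
  rw [map_smul, smul_eq_mul]
  by_cases hi : i ∈ σ
  · have hbmem : (fun j => (a i : ℝ) * (v i j : ℝ)) ∈ coneOf d r v σ := by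
      refine ⟨fun i' => if i' = i then (a i : ℝ) else 0, ?_, ?_, ?_⟩
      · intro i'
        dsimp only
        by_cases h' : i' = i
        · rw [if_pos h']
          positivity
        · rw [if_neg h']
      · intro i' hi'
        have : i' ≠ i := fun h => hi' (h ▸ hi)
        simp [this]
      · intro j
        dsimp only
        have hsplit : ∀ i' : Fin r, ((if i' = i then (a i : ℝ) else 0) * (v i' j : ℝ))
            = if i' = i then (a i' : ℝ) * (v i' j : ℝ) else 0 := by
          intro i'
          by_cases h' : i' = i
          · subst h'
            rw [if_pos rfl, if_pos rfl]
          · rw [if_neg h', if_neg h', zero_mul]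
        simp only [hsplit]
        rw [Finset.sum_ite_eq' Finset.univ i (fun i' => (a i' : ℝ) * (v i' j : ℝ))]
        simp
    have h1 : ℓ (fun j => (a i : ℝ) * (v i j : ℝ)) = 1 := by
      rw [← hℓ _ hbmem]
      exact hψb i
    have h2 : (fun j => (a i : ℝ) * (v i j : ℝ)) = (a i : ℝ) • (fun j => (v i j : ℝ)) := by
      funext j
      simp
    rw [h2, map_smul, smul_eq_mul] at h1
    have hai : (a i : ℝ) ≠ 0 := ne_of_gt (by exact_mod_cast ha i)
    have : ℓ (fun j => (v i j : ℝ)) = 1 / (a i : ℝ) := by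
      field_simp at h1 ⊢
      linarith [h1]
    rw [this]
    ring
  · rw [hsupp i hi]
    ring

lemma psi_nonneg {d r : ℕ} {v : Fin r → Fin d → ℤ} {a : Fin r → ℕ} (ha : ∀ i, 0 < a i)
    {ψ : (Fin d → ℝ) → ℝ} {cones : Finset (Finset (Fin r))}
    (hcomplete : ∀ x : Fin d → ℝ, ∃ σ ∈ cones, x ∈ coneOf d r v σ)
    (hψlin : ∀ σ ∈ cones, ∃ ℓ : (Fin d → ℝ) →ₗ[ℝ] ℝ, ∀ x ∈ coneOf d r v σ, ψ x = ℓ x)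
    (hψb : ∀ i, ψ (fun j => (a i : ℝ) * (v i j : ℝ)) = 1)
    (x : Fin d → ℝ) : 0 ≤ ψ x := by
  obtain ⟨σ, hσ, c, hpos, hsupp, hrep⟩ := hcomplete x
  rw [psi_formula ha (hψlin σ hσ) hψb hpos hsupp hrep]
  apply Finset.sum_nonneg
  intro i _
  exact div_nonneg (hpos i) (by positivity)

lemma psi_zero_set {d r : ℕ} {v : Fin r → Fin d → ℤ} {a : Fin r → ℕ} (ha : ∀ i, 0 < a i)
    {ψ : (Fin d → ℝ) → ℝ} {cones : Finset (Finset (Fin r))}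
    (hindep : ∀ σ ∈ cones, LinearIndependent ℝ (fun i : σ => fun j => (v i j : ℝ)))
    (hcomplete : ∀ x : Fin d → ℝ, ∃ σ ∈ cones, x ∈ coneOf d r v σ)
    (hψlin : ∀ σ ∈ cones, ∃ ℓ : (Fin d → ℝ) →ₗ[ℝ] ℝ, ∀ x ∈ coneOf d r v σ, ψ x = ℓ x)
    (hψb : ∀ i, ψ (fun j => (a i : ℝ) * (v i j : ℝ)) = 1) :
    {w : Fin d → ℤ | ψ (fun j => (w j : ℝ)) ≤ (0 : ℝ)} = {0} := by
  ext w
  simp only [Set.mem_setOf_eq, Set.mem_singleton_iff]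
  constructor
  · intro hw
    obtain ⟨σ, hσ, c, hpos, hsupp, hrep⟩ := hcomplete (fun j => (w j : ℝ))
    rw [psi_formula ha (hψlin σ hσ) hψb hpos hsupp hrep] at hw
    have hzero : ∀ i ∈ Finset.univ, c i / (a i : ℝ) = 0 := by
      apply (Finset.sum_eq_zero_iff_of_nonneg ?_).mp
      · refine le_antisymm hw ?_
        apply Finset.sum_nonneg
        intro i _
        exact div_nonneg (hpos i) (by positivity)
      · intro i _
        exact div_nonneg (hpos i) (by positivity)
    have hc0 : ∀ i, c i = 0 := by
      intro i
      have hai : (a i : ℝ) ≠ 0 := ne_of_gt (by exact_mod_cast ha i)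
      have := hzero i (Finset.mem_univ i)
      field_simp at this
      simpa using this
    funext j
    have := hrep j
    simp only [hc0, zero_mul, Finset.sum_const_zero] at this
    exact_mod_cast this
  · rintro rfl
    obtain ⟨σ, hσ, c, hpos, hsupp, hrep⟩ := hcomplete (fun j => ((0 : Fin d → ℤ) j : ℝ))
    have hc : c = 0 := by
      apply coeff_unique (hindep σ hσ) hsupp (fun i _ => rfl)
      intro j
      rw [← hrep j]
      simp
    rw [psi_formula ha (hψlin σ hσ) hψb hpos hsupp hrep, hc]
    simp

lemma exists_strict {d r : ℕ} {v : Fin r → Fin d → ℤ} {cones : Finset (Finset (Fin r))}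
    (hdown : ∀ σ ∈ cones, ∀ τ ⊆ σ, τ ∈ cones)
    (hcomplete : ∀ x : Fin d → ℝ, ∃ σ ∈ cones, x ∈ coneOf d r v σ)
    (x : Fin d → ℝ) : ∃ σ ∈ cones, Strict v σ x := by
  classical
  set T := cones.filter (fun σ => x ∈ coneOf d r v σ) with hT
  have hTne : T.Nonempty := by
    obtain ⟨σ, hσ, hm⟩ := hcomplete x
    exact ⟨σ, Finset.mem_filter.mpr ⟨hσ, hm⟩⟩
  obtain ⟨σ₀, hσ₀T, hmin⟩ := T.exists_min_image Finset.card hTne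
  have hσ₀ : σ₀ ∈ cones := (Finset.mem_filter.mp hσ₀T).1
  obtain ⟨c, hpos, hsupp, hrep⟩ := (Finset.mem_filter.mp hσ₀T).2
  refine ⟨σ₀, hσ₀, c, hsupp, ?_, hrep⟩
  intro i hi
  rcases lt_or_eq_of_le (hpos i) with h | h
  · exact h
  · exfalso
    have hsub : σ₀.erase i ∈ cones := hdown σ₀ hσ₀ _ (Finset.erase_subset i σ₀)
    have hmem : x ∈ coneOf d r v (σ₀.erase i) := by
      refine ⟨c, hpos, ?_, hrep⟩
      intro i' hi'
      by_cases h' : i' = i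
      · rw [h', ← h]
      · exact hsupp i' (fun hmem' => hi' (Finset.mem_erase.mpr ⟨h', hmem'⟩))
    have hTmem : σ₀.erase i ∈ T := Finset.mem_filter.mpr ⟨hsub, hmem⟩
    have := hmin _ hTmem
    have hlt : (σ₀.erase i).card < σ₀.card := Finset.card_erase_lt_of_mem hi
    omega

lemma strict_unique {d r : ℕ} {v : Fin r → Fin d → ℤ} {cones : Finset (Finset (Fin r))}
    (hindep : ∀ σ ∈ cones, LinearIndependent ℝ (fun i : σ => fun j => (v i j : ℝ)))
    (hfan : ∀ σ ∈ cones, ∀ τ ∈ cones,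
      coneOf d r v σ ∩ coneOf d r v τ = coneOf d r v (σ ∩ τ))
    {σ τ : Finset (Fin r)} (hσ : σ ∈ cones) (hτ : τ ∈ cones) {x : Fin d → ℝ}
    (h1 : Strict v σ x) (h2 : Strict v τ x) : σ = τ := by
  classical
  obtain ⟨c, hsupp, hposc, hrep⟩ := h1
  obtain ⟨c', hsupp', hposc', hrep'⟩ := h2
  have hposAll : ∀ i, 0 ≤ c i := by
    intro i
    by_cases hi : i ∈ σ
    · exact le_of_lt (hposc i hi)
    · rw [hsupp i hi]
  have hposAll' : ∀ i, 0 ≤ c' i := by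
    intro i
    by_cases hi : i ∈ τ
    · exact le_of_lt (hposc' i hi)
    · rw [hsupp' i hi]
  have hmem : x ∈ coneOf d r v σ ∩ coneOf d r v τ :=
    ⟨⟨c, hposAll, hsupp, hrep⟩, ⟨c', hposAll', hsupp', hrep'⟩⟩
  rw [hfan σ hσ τ hτ] at hmem
  obtain ⟨c'', hpos'', hsupp'', hrep''⟩ := hmem
  have hcc : c = c'' := by
    apply coeff_unique (hindep σ hσ) hsupp
      (fun i hi => hsupp'' i (fun hm => hi (Finset.mem_of_mem_inter_left hm)))
    intro j
    rw [← hrep j, ← hrep'' j]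
  have hcc' : c' = c'' := by
    apply coeff_unique (hindep τ hτ) hsupp'
      (fun i hi => hsupp'' i (fun hm => hi (Finset.mem_of_mem_inter_right hm)))
    intro j
    rw [← hrep' j, ← hrep'' j]
  apply Finset.Subset.antisymm
  · intro i hi
    by_contra hit
    have : c'' i = 0 := hsupp'' i (fun hm => hit (Finset.mem_of_mem_inter_right hm))
    rw [← hcc] at this
    exact absurd this (ne_of_gt (hposc i hi))
  · intro i hi
    by_contra hit
    have : c'' i = 0 := hsupp'' i (fun hm => hit (Finset.mem_of_mem_inter_left hm))
    rw [← hcc'] at this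
    exact absurd this (ne_of_gt (hposc' i hi))

/-! ### the half-open box -/

def bz {d r : ℕ} (v : Fin r → Fin d → ℤ) (a : Fin r → ℕ) (i : Fin r) : Fin d → ℤ :=
  fun j => (a i : ℤ) * v i j

def BoxSet {d r : ℕ} (v : Fin r → Fin d → ℤ) (a : Fin r → ℕ) (σ : Finset (Fin r)) :
    Set (Fin d → ℤ) :=
  {u | ∃ t : Fin r → ℝ, (∀ i ∈ σ, 0 < t i ∧ t i ≤ 1) ∧ (∀ i ∉ σ, t i = 0) ∧
    ∀ j, (u j : ℝ) = ∑ i, t i * ((a i : ℝ) * (v i j : ℝ))}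

lemma boxSet_finite {d r : ℕ} (v : Fin r → Fin d → ℤ) (a : Fin r → ℕ) (σ : Finset (Fin r)) :
    (BoxSet v a σ).Finite := by
  classical
  set C : Fin d → ℤ := fun j => ∑ i, (a i : ℤ) * |v i j| with hC
  apply Set.Finite.subset (Set.finite_Icc (fun j => -C j) C)
  rintro u ⟨t, ht1, ht2, ht3⟩
  have habs : ∀ j, |u j| ≤ C j := by
    intro j
    have hreal : |(u j : ℝ)| ≤ (C j : ℝ) := by
      rw [ht3 j]
      refine le_trans (Finset.abs_sum_le_sum_abs _ _) ?_
      have hCcast : (C j : ℝ) = ∑ i, (a i : ℝ) * |(v i j : ℝ)| := by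
        rw [hC]
        push_cast
        rfl
      rw [hCcast]
      apply Finset.sum_le_sum
      intro i _
      rw [abs_mul, abs_mul]
      have hti : |t i| ≤ 1 := by
        by_cases hi : i ∈ σ
        · rw [abs_of_pos (ht1 i hi).1]
          exact (ht1 i hi).2
        · rw [ht2 i hi]
          simp
      have ha' : |(a i : ℝ)| = (a i : ℝ) := abs_of_nonneg (by positivity)
      rw [ha']
      calc |t i| * ((a i : ℝ) * |(v i j : ℝ)|) ≤ 1 * ((a i : ℝ) * |(v i j : ℝ)|) := by
            apply mul_le_mul_of_nonneg_right hti
            positivity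
        _ = (a i : ℝ) * |(v i j : ℝ)| := one_mul _
    have : ((|u j| : ℤ) : ℝ) ≤ ((C j : ℤ) : ℝ) := by
      rw [Int.cast_abs]
      exact hreal
    exact_mod_cast this
  rw [Set.mem_Icc]
  constructor
  · intro j
    have h := abs_le.mp (habs j)
    show -(C j) ≤ u j
    omega
  · intro j
    have h := abs_le.mp (habs j)
    show u j ≤ C j
    omega

noncomputable def BoxF {d r : ℕ} (v : Fin r → Fin d → ℤ) (a : Fin r → ℕ)
    (σ : Finset (Fin r)) : Finset (Fin d → ℤ) := (boxSet_finite v a σ).toFinset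

noncomputable def KK {d : ℕ} (ψ : (Fin d → ℝ) → ℝ) (u : Fin d → ℤ) : ℕ :=
  (Int.ceil (ψ (castZ u))).toNat

noncomputable def EF {d r : ℕ} (v : Fin r → Fin d → ℤ) (a : Fin r → ℕ)
    (ψ : (Fin d → ℝ) → ℝ) (σ : Finset (Fin r)) (m : ℕ) : Finset (Fin d → ℤ) :=
  ((BoxF v a σ).sigma (fun u => if KK ψ u ≤ m then sumLE σ (m - KK ψ u)
      else (∅ : Finset (Fin r → ℕ)))).image
    (fun p => p.1 + ∑ i, p.2 i • bz v a i)

lemma box_psi {d r : ℕ} {v : Fin r → Fin d → ℤ} {a : Fin r → ℕ} (ha : ∀ i, 0 < a i)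
    {ψ : (Fin d → ℝ) → ℝ} {σ : Finset (Fin r)}
    (hlin : ∃ ℓ : (Fin d → ℝ) →ₗ[ℝ] ℝ, ∀ x ∈ coneOf d r v σ, ψ x = ℓ x)
    (hψb : ∀ i, ψ (fun j => (a i : ℝ) * (v i j : ℝ)) = 1)
    {u : Fin d → ℤ} {t : Fin r → ℝ} (ht1 : ∀ i ∈ σ, 0 < t i ∧ t i ≤ 1)
    (ht2 : ∀ i ∉ σ, t i = 0)
    (ht3 : ∀ j, (u j : ℝ) = ∑ i, t i * ((a i : ℝ) * (v i j : ℝ))) :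
    ψ (castZ u) = ∑ i, t i := by
  have hpos : ∀ i, 0 ≤ t i * (a i : ℝ) := by
    intro i
    by_cases hi : i ∈ σ
    · have := (ht1 i hi).1
      have := ha i
      positivity
    · rw [ht2 i hi, zero_mul]
  have hsupp : ∀ i ∉ σ, t i * (a i : ℝ) = 0 := fun i hi => by rw [ht2 i hi, zero_mul]
  have hrep : ∀ j, (castZ u) j = ∑ i, (t i * (a i : ℝ)) * (v i j : ℝ) := by
    intro j
    rw [castZ, ht3 j]
    apply Finset.sum_congr rfl
    intro i _
    ring
  rw [psi_formula ha hlin hψb hpos hsupp hrep]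
  apply Finset.sum_congr rfl
  intro i _
  have hai : (a i : ℝ) ≠ 0 := ne_of_gt (by exact_mod_cast ha i)
  field_simp

lemma box_psi_bounds {d r : ℕ} {v : Fin r → Fin d → ℤ} {a : Fin r → ℕ} (ha : ∀ i, 0 < a i)
    {ψ : (Fin d → ℝ) → ℝ} {σ : Finset (Fin r)}
    (hlin : ∃ ℓ : (Fin d → ℝ) →ₗ[ℝ] ℝ, ∀ x ∈ coneOf d r v σ, ψ x = ℓ x)
    (hψb : ∀ i, ψ (fun j => (a i : ℝ) * (v i j : ℝ)) = 1)
    {u : Fin d → ℤ} (hu : u ∈ BoxSet v a σ) :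
    0 ≤ ψ (castZ u) ∧ ψ (castZ u) ≤ (σ.card : ℝ) ∧ ((KK ψ u : ℤ) : ℝ) = (Int.ceil (ψ (castZ u)) : ℝ)
      ∧ KK ψ u ≤ σ.card := by
  obtain ⟨t, ht1, ht2, ht3⟩ := hu
  have hψu := box_psi ha hlin hψb ht1 ht2 ht3
  have h0 : 0 ≤ ψ (castZ u) := by
    rw [hψu]
    apply Finset.sum_nonneg
    intro i _
    by_cases hi : i ∈ σ
    · exact le_of_lt (ht1 i hi).1
    · rw [ht2 i hi]
  have h1 : ψ (castZ u) ≤ (σ.card : ℝ) := by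
    rw [hψu]
    have : ∑ i, t i = ∑ i ∈ σ, t i := by
      rw [eq_comm]
      apply Finset.sum_subset (Finset.subset_univ σ)
      intro i _ hi
      exact ht2 i hi
    rw [this]
    calc ∑ i ∈ σ, t i ≤ ∑ _i ∈ σ, (1 : ℝ) := Finset.sum_le_sum (fun i hi => (ht1 i hi).2)
      _ = (σ.card : ℝ) := by simp
  have hceil : (0 : ℤ) ≤ Int.ceil (ψ (castZ u)) := Int.ceil_nonneg h0
  have hKcast : ((KK ψ u : ℤ) : ℝ) = (Int.ceil (ψ (castZ u)) : ℝ) := by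
    rw [KK, Int.toNat_of_nonneg hceil]
  refine ⟨h0, h1, hKcast, ?_⟩
  have : Int.ceil (ψ (castZ u)) ≤ (σ.card : ℤ) := Int.ceil_le.mpr (by exact_mod_cast h1)
  rw [KK]
  omega

lemma cast_phi {d r : ℕ} (v : Fin r → Fin d → ℤ) (a : Fin r → ℕ) (u : Fin d → ℤ)
    (n : Fin r → ℕ) (j : Fin d) :
    (((u + ∑ i, n i • bz v a i) j : ℤ) : ℝ)
      = (u j : ℝ) + ∑ i, (n i : ℝ) * ((a i : ℝ) * (v i j : ℝ)) := by
  have h1 : (u + ∑ i, n i • bz v a i) j = u j + ∑ i, (n i : ℤ) * ((a i : ℤ) * v i j) := by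
    rw [Pi.add_apply, Finset.sum_apply]
    refine congrArg (u j + ·) (Finset.sum_congr rfl fun i _ => ?_)
    rw [Pi.smul_apply, bz, nsmul_eq_mul]
  rw [h1]
  push_cast
  ring

lemma phi_rep {d r : ℕ} (v : Fin r → Fin d → ℤ) (a : Fin r → ℕ) (u : Fin d → ℤ)
    (t : Fin r → ℝ) (n : Fin r → ℕ)
    (ht3 : ∀ j, (u j : ℝ) = ∑ i, t i * ((a i : ℝ) * (v i j : ℝ))) (j : Fin d) :
    (((u + ∑ i, n i • bz v a i) j : ℤ) : ℝ)
      = ∑ i, ((t i + (n i : ℝ)) * (a i : ℝ)) * (v i j : ℝ) := by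
  rw [cast_phi, ht3 j, ← Finset.sum_add_distrib]
  apply Finset.sum_congr rfl
  intro i _
  ring

lemma EF_mem_iff {d r : ℕ} {v : Fin r → Fin d → ℤ} {a : Fin r → ℕ} (ha : ∀ i, 0 < a i)
    {ψ : (Fin d → ℝ) → ℝ} {σ : Finset (Fin r)}
    (hlin : ∃ ℓ : (Fin d → ℝ) →ₗ[ℝ] ℝ, ∀ x ∈ coneOf d r v σ, ψ x = ℓ x)
    (hψb : ∀ i, ψ (fun j => (a i : ℝ) * (v i j : ℝ)) = 1)
    (m : ℕ) (w : Fin d → ℤ) :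
    w ∈ EF v a ψ σ m ↔ Strict v σ (castZ w) ∧ ψ (castZ w) ≤ (m : ℝ) := by
  classical
  constructor
  · intro hw
    obtain ⟨p, hp, hpw⟩ := Finset.mem_image.mp hw
    obtain ⟨u, n⟩ := p
    rw [Finset.mem_sigma] at hp
    obtain ⟨hu, hn⟩ := hp
    dsimp only at hpw hu hn
    by_cases hK : KK ψ u ≤ m
    swap
    · rw [if_neg hK] at hn
      exact absurd hn (Finset.notMem_empty n)
    rw [if_pos hK, mem_sumLE] at hn
    obtain ⟨hnsupp, hnsum⟩ := hn
    have huB : u ∈ BoxSet v a σ := (boxSet_finite v a σ).mem_toFinset.mp hu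
    obtain ⟨t, ht1, ht2, ht3⟩ := huB
    have hrep : ∀ j, (castZ w) j = ∑ i, ((t i + (n i : ℝ)) * (a i : ℝ)) * (v i j : ℝ) := by
      intro j
      show (w j : ℝ) = _
      rw [← hpw]
      exact phi_rep v a u t n ht3 j
    have hcsupp : ∀ i ∉ σ, (t i + (n i : ℝ)) * (a i : ℝ) = 0 := by
      intro i hi
      rw [ht2 i hi, hnsupp i hi]
      simp
    have hcpos : ∀ i, 0 ≤ (t i + (n i : ℝ)) * (a i : ℝ) := by
      intro i
      by_cases hi : i ∈ σ
      · have h1 := (ht1 i hi).1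
        have h2 : (0 : ℝ) ≤ n i := Nat.cast_nonneg _
        have h3 : (0 : ℝ) < a i := by exact_mod_cast ha i
        nlinarith
      · rw [hcsupp i hi]
    have hψw := psi_formula ha hlin hψb hcpos hcsupp hrep
    have hdiv : ∀ i ∈ Finset.univ, ((t i + (n i : ℝ)) * (a i : ℝ)) / (a i : ℝ)
        = t i + (n i : ℝ) := by
      intro i _
      have hai : (a i : ℝ) ≠ 0 := ne_of_gt (by exact_mod_cast ha i)
      field_simp
    rw [Finset.sum_congr rfl hdiv, Finset.sum_add_distrib] at hψw
    have hψu := box_psi ha hlin hψb ht1 ht2 ht3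
    have hsumn : ∑ i, (n i : ℝ) = ((∑ i ∈ σ, n i : ℕ) : ℝ) := by
      rw [Nat.cast_sum, eq_comm]
      apply Finset.sum_subset (Finset.subset_univ σ)
      intro i _ hi
      rw [hnsupp i hi]
      simp
    have hbounds := box_psi_bounds ha hlin hψb ⟨t, ht1, ht2, ht3⟩
    constructor
    · refine ⟨fun i => (t i + (n i : ℝ)) * (a i : ℝ), hcsupp, fun i hi => ?_, hrep⟩
      show 0 < (t i + (n i : ℝ)) * (a i : ℝ)
      have h1 := (ht1 i hi).1
      have h2 : (0 : ℝ) ≤ n i := Nat.cast_nonneg _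
      have h3 : (0 : ℝ) < a i := by exact_mod_cast ha i
      nlinarith
    · rw [hψw, hsumn, ← hψu]
      have hle1 : ψ (castZ u) ≤ ((KK ψ u : ℤ) : ℝ) := by
        rw [hbounds.2.2.1]
        exact Int.le_ceil _
      have hle2 : (KK ψ u : ℕ) + (∑ i ∈ σ, n i) ≤ m := by omega
      have hle2' : ((KK ψ u : ℕ) : ℝ) + ((∑ i ∈ σ, n i : ℕ) : ℝ) ≤ (m : ℝ) := by
        exact_mod_cast hle2
      push_cast at hle1
      linarith
  · rintro ⟨⟨c, hsupp, hpos, hrep⟩, hψm⟩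
    set e : Fin r → ℝ := fun i => c i / (a i : ℝ) with he
    have hepos : ∀ i ∈ σ, 0 < e i := fun i hi =>
      div_pos (hpos i hi) (by exact_mod_cast ha i)
    have hesupp : ∀ i ∉ σ, e i = 0 := by
      intro i hi
      rw [he]
      simp only
      rw [hsupp i hi, zero_div]
    set n : Fin r → ℕ := fun i => if i ∈ σ then (Int.ceil (e i) - 1).toNat else 0 with hndef
    set t : Fin r → ℝ := fun i => if i ∈ σ then e i - (n i : ℝ) else 0 with htdef
    have hni : ∀ i ∈ σ, ((n i : ℤ)) = Int.ceil (e i) - 1 := by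
      intro i hi
      have hcpos : 0 < Int.ceil (e i) := Int.ceil_pos.mpr (hepos i hi)
      rw [hndef]
      simp only [if_pos hi]
      rw [Int.toNat_of_nonneg (by omega)]
    have htval : ∀ i ∈ σ, t i = e i - (n i : ℝ) := by
      intro i hi
      rw [htdef]
      simp only [if_pos hi]
    have ht1 : ∀ i ∈ σ, 0 < t i ∧ t i ≤ 1 := by
      intro i hi
      have h1 : (Int.ceil (e i) : ℝ) < e i + 1 := Int.ceil_lt_add_one _
      have h2 : e i ≤ (Int.ceil (e i) : ℝ) := Int.le_ceil _
      have h3 : ((n i : ℤ) : ℝ) = (Int.ceil (e i) : ℝ) - 1 := by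
        rw [hni i hi, Int.cast_sub, Int.cast_one]
      have hcast : ((n i : ℝ)) = (Int.ceil (e i) : ℝ) - 1 := by
        rw [← h3, Int.cast_natCast]
      rw [htval i hi, hcast]
      constructor <;> linarith
    have ht2 : ∀ i ∉ σ, t i = 0 := by
      intro i hi
      rw [htdef]
      simp only [if_neg hi]
    have hte : ∀ i, t i + (n i : ℝ) = e i := by
      intro i
      by_cases hi : i ∈ σ
      · rw [htval i hi]
        ring
      · rw [ht2 i hi, hesupp i hi, hndef]
        simp only [if_neg hi]
        simp
    set u : Fin d → ℤ := w - ∑ i, n i • bz v a i with hudef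
    have hw' : u + ∑ i, n i • bz v a i = w := by
      rw [hudef]
      abel
    have hurep : ∀ j, (u j : ℝ) = ∑ i, t i * ((a i : ℝ) * (v i j : ℝ)) := by
      intro j
      have hcast := cast_phi v a u n j
      rw [hw'] at hcast
      have hwj : (w j : ℝ) = ∑ i, c i * (v i j : ℝ) := hrep j
      have hci : ∀ i, c i = e i * (a i : ℝ) := by
        intro i
        rw [he]
        have hai : (a i : ℝ) ≠ 0 := ne_of_gt (by exact_mod_cast ha i)
        field_simp
      have : (u j : ℝ) = ∑ i, c i * (v i j : ℝ) - ∑ i, (n i : ℝ) * ((a i : ℝ) * (v i j : ℝ)) := by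
        rw [← hwj]
        linarith [hcast]
      rw [this, ← Finset.sum_sub_distrib]
      apply Finset.sum_congr rfl
      intro i _
      rw [hci i, ← hte i]
      ring
    have huB : u ∈ BoxSet v a σ := ⟨t, ht1, ht2, hurep⟩
    have hψu := box_psi ha hlin hψb ht1 ht2 hurep
    have hψw : ψ (castZ w) = ψ (castZ u) + ((∑ i ∈ σ, n i : ℕ) : ℝ) := by
      have hcpos : ∀ i, 0 ≤ c i := by
        intro i
        by_cases hi : i ∈ σ
        · exact le_of_lt (hpos i hi)
        · rw [hsupp i hi]
      have hφ := psi_formula ha hlin hψb hcpos hsupp hrep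
      have hφ2 : ∑ i, c i / (a i : ℝ) = ∑ i, (t i + (n i : ℝ)) := by
        apply Finset.sum_congr rfl
        intro i _
        rw [hte i, he]
      rw [hφ, hφ2, Finset.sum_add_distrib, hψu]
      congr 1
      rw [Nat.cast_sum, eq_comm]
      apply Finset.sum_subset (Finset.subset_univ σ)
      intro i _ hi
      rw [hndef]
      simp only [if_neg hi]
      simp
    have hbounds := box_psi_bounds ha hlin hψb huB
    have hKm : KK ψ u + ∑ i ∈ σ, n i ≤ m := by
      have hceil : Int.ceil (ψ (castZ u)) ≤ (m : ℤ) - (∑ i ∈ σ, n i : ℕ) := by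
        apply Int.ceil_le.mpr
        have hx : ψ (castZ u) + ((∑ i ∈ σ, n i : ℕ) : ℝ) ≤ (m : ℝ) := by
          rw [← hψw]
          exact hψm
        push_cast at hx ⊢
        linarith [hx]
      have hKnat : (KK ψ u : ℤ) = Int.ceil (ψ (castZ u)) := by
        exact_mod_cast hbounds.2.2.1
      omega
    refine Finset.mem_image.mpr ⟨⟨u, n⟩, ?_, ?_⟩
    · rw [Finset.mem_sigma]
      refine ⟨(boxSet_finite v a σ).mem_toFinset.mpr huB, ?_⟩
      dsimp only
      rw [if_pos (by omega : KK ψ u ≤ m), mem_sumLE]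
      refine ⟨fun i hi => by rw [hndef]; simp only [if_neg hi], by omega⟩
    · exact hw'

lemma EF_card {d r : ℕ} {v : Fin r → Fin d → ℤ} {a : Fin r → ℕ} (ha : ∀ i, 0 < a i)
    {ψ : (Fin d → ℝ) → ℝ} {σ : Finset (Fin r)}
    (hind : LinearIndependent ℝ (fun i : σ => fun j => (v i j : ℝ)))
    (m : ℕ) :
    (EF v a ψ σ m).card = ∑ u ∈ BoxF v a σ, cnt (KK ψ u) σ.card m := by
  classical
  rw [EF, Finset.card_image_of_injOn, Finset.card_sigma]
  · apply Finset.sum_congr rfl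
    intro u _
    by_cases hK : KK ψ u ≤ m
    · rw [if_pos hK, card_sumLE, cnt, if_pos hK]
    · rw [if_neg hK, cnt, if_neg hK, Finset.card_empty]
  · rintro ⟨u1, n1⟩ h1 ⟨u2, n2⟩ h2 heq
    simp only [Finset.coe_sigma, Set.mem_sigma_iff, Finset.mem_coe] at h1 h2
    obtain ⟨hu1, hn1⟩ := h1
    obtain ⟨hu2, hn2⟩ := h2
    have heq' : u1 + ∑ i, n1 i • bz v a i = u2 + ∑ i, n2 i • bz v a i := heq
    have hn1supp : ∀ i ∉ σ, n1 i = 0 := by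
      by_cases hK : KK ψ u1 ≤ m
      · rw [if_pos hK, mem_sumLE] at hn1
        exact hn1.1
      · rw [if_neg hK] at hn1
        exact absurd hn1 (Finset.notMem_empty n1)
    have hn2supp : ∀ i ∉ σ, n2 i = 0 := by
      by_cases hK : KK ψ u2 ≤ m
      · rw [if_pos hK, mem_sumLE] at hn2
        exact hn2.1
      · rw [if_neg hK] at hn2
        exact absurd hn2 (Finset.notMem_empty n2)
    obtain ⟨t1, ht11, ht12, ht13⟩ := (boxSet_finite v a σ).mem_toFinset.mp hu1
    obtain ⟨t2, ht21, ht22, ht23⟩ := (boxSet_finite v a σ).mem_toFinset.mp hu2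
    have hkey : (fun i => (t1 i + (n1 i : ℝ)) * (a i : ℝ))
        = (fun i => (t2 i + (n2 i : ℝ)) * (a i : ℝ)) := by
      apply coeff_unique hind
      · intro i hi
        rw [ht12 i hi, hn1supp i hi]
        simp
      · intro i hi
        rw [ht22 i hi, hn2supp i hi]
        simp
      · intro j
        have e1 := phi_rep v a u1 t1 n1 ht13 j
        have e2 := phi_rep v a u2 t2 n2 ht23 j
        rw [← e1, ← e2, heq']
    have hsum : ∀ i, t1 i + (n1 i : ℝ) = t2 i + (n2 i : ℝ) := by
      intro i
      have hai : (a i : ℝ) ≠ 0 := ne_of_gt (by exact_mod_cast ha i)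
      have h5 : (t1 i + (n1 i : ℝ)) * (a i : ℝ) = (t2 i + (n2 i : ℝ)) * (a i : ℝ) :=
        congrFun hkey i
      exact mul_right_cancel₀ hai h5
    have hneq : n1 = n2 := by
      funext i
      by_cases hi : i ∈ σ
      · have h1 := (ht11 i hi)
        have h2 := (ht21 i hi)
        have hs := hsum i
        have hlt1 : ((n1 i : ℝ)) < (n2 i : ℝ) + 1 := by linarith
        have hlt2 : ((n2 i : ℝ)) < (n1 i : ℝ) + 1 := by linarith
        have hz1 : (n1 i : ℕ) < n2 i + 1 := by exact_mod_cast hlt1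
        have hz2 : (n2 i : ℕ) < n1 i + 1 := by exact_mod_cast hlt2
        omega
      · rw [hn1supp i hi, hn2supp i hi]
    have hueq : u1 = u2 := by
      rw [hneq] at heq'
      exact add_right_cancel heq'
    rw [Sigma.mk.inj_iff]
    exact ⟨hueq, heq_of_eq hneq⟩

lemma card_le_dim {d r : ℕ} {v : Fin r → Fin d → ℤ} {σ : Finset (Fin r)}
    (hind : LinearIndependent ℝ (fun i : σ => fun j => (v i j : ℝ))) : σ.card ≤ d := by
  have h := LinearIndependent.fintype_card_le_finrank hind
  rwa [Fintype.card_coe, Module.finrank_pi, Fintype.card_fin] at h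

lemma exists_fulldim {d r : ℕ} {v : Fin r → Fin d → ℤ} {cones : Finset (Finset (Fin r))}
    (hindep : ∀ σ ∈ cones, LinearIndependent ℝ (fun i : σ => fun j => (v i j : ℝ)))
    (hcomplete : ∀ x : Fin d → ℝ, ∃ σ ∈ cones, x ∈ coneOf d r v σ) :
    ∃ σ ∈ cones, σ.card = d := by
  classical
  by_contra hcon
  push_neg at hcon
  set M : Finset (Fin r) → Submodule ℝ (Fin d → ℝ) :=
    fun σ => Submodule.span ℝ (Set.range (fun i : σ => fun j => (v (i : Fin r) j : ℝ))) with hM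
  have hsub : ∀ σ ∈ cones, coneOf d r v σ ⊆ (M σ : Set (Fin d → ℝ)) := by
    intro σ hσ x hx
    obtain ⟨c, hpos, hsupp, hrep⟩ := hx
    have hxe : x = ∑ i ∈ σ, c i • (fun j => (v i j : ℝ)) := by
      funext j
      rw [hrep j]
      rw [Finset.sum_apply]
      simp only [Pi.smul_apply, smul_eq_mul]
      rw [eq_comm]
      apply Finset.sum_subset (Finset.subset_univ σ)
      intro i _ hi
      rw [hsupp i hi, zero_mul]
    rw [hxe]
    apply Submodule.sum_mem
    intro i hi
    apply Submodule.smul_mem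
    apply Submodule.subset_span
    exact ⟨⟨i, hi⟩, rfl⟩
  have hne : ∀ σ ∈ cones, M σ ≠ ⊤ := by
    intro σ hσ htop
    have hrank : Module.finrank ℝ (M σ) ≤ σ.card := by
      refine le_trans (finrank_span_le_card _) ?_
      rw [Set.toFinset_card]
      exact le_trans (Fintype.card_range_le _) (by rw [Fintype.card_coe])
    rw [htop, finrank_top, Module.finrank_pi, Fintype.card_fin] at hrank
    have hlt := hcon σ hσ
    have hled := card_le_dim (hindep σ hσ)
    omega
  have hcover : (Set.univ : Set (Fin d → ℝ)) ⊆ ⋃ σ ∈ cones, (M σ : Set (Fin d → ℝ)) := by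
    intro x _
    obtain ⟨σ, hσ, hm⟩ := hcomplete x
    exact Set.mem_biUnion hσ (hsub σ hσ hm)
  have h0 : MeasureTheory.volume (⋃ σ ∈ cones, (M σ : Set (Fin d → ℝ))) = 0 := by
    exact (MeasureTheory.measure_biUnion_null_iff (μ := MeasureTheory.volume)
      cones.countable_toSet).mpr
      (fun σ hσ => MeasureTheory.Measure.addHaar_submodule _ _ (hne σ hσ))
  have huniv : MeasureTheory.volume (Set.univ : Set (Fin d → ℝ)) = 0 :=
    le_antisymm (h0 ▸ MeasureTheory.measure_mono hcover) zero_le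
  exact IsOpen.measure_ne_zero MeasureTheory.volume isOpen_univ Set.univ_nonempty huniv

lemma box_nonempty {d r : ℕ} (v : Fin r → Fin d → ℤ) (a : Fin r → ℕ) (σ : Finset (Fin r)) :
    (∑ i ∈ σ, bz v a i) ∈ BoxSet v a σ := by
  classical
  refine ⟨fun i => if i ∈ σ then 1 else 0, ?_, ?_, ?_⟩
  · intro i hi
    dsimp only
    rw [if_pos hi]
    norm_num
  · intro i hi
    dsimp only
    rw [if_neg hi]
  · intro j
    have hL : ((∑ i ∈ σ, bz v a i) j : ℤ) = ∑ i ∈ σ, (a i : ℤ) * v i j := by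
      rw [Finset.sum_apply]
      rfl
    have hR : ∑ i, (if i ∈ σ then (1 : ℝ) else 0) * ((a i : ℝ) * (v i j : ℝ))
        = ∑ i ∈ σ, (a i : ℝ) * (v i j : ℝ) := by
      rw [Finset.sum_congr rfl (fun i _ => by rw [ite_mul, one_mul, zero_mul]),
        Finset.sum_ite_mem, Finset.univ_inter]
    rw [hR, hL]
    push_cast
    rfl

/-- **Ehrhart.** For `Q = {x ∈ |Σ| : ψ(x) ≤ 1}` with `Σ` a complete simplicial
rational fan and `ψ` piecewise `ℚ`-linear with `ψ(b_i) = 1`, the lattice-point counting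
function `f_Q(m) = #(mQ ∩ N)` agrees with a polynomial of degree `d` for `m ≥ 1`, and
`1 + ∑_{m ≥ 1} f_Q(m) t^m = δ_Q(t)/(1-t)^{d+1}` for a polynomial `δ_Q` of degree `≤ d`. -/
theorem stmt_7 (d r : ℕ) (v : Fin r → Fin d → ℤ)
    (cones : Finset (Finset (Fin r)))
    (hdown : ∀ σ ∈ cones, ∀ τ ⊆ σ, τ ∈ cones)
    (hindep : ∀ σ ∈ cones, LinearIndependent ℝ (fun i : σ => fun j => (v i j : ℝ)))
    (hfan : ∀ σ ∈ cones, ∀ τ ∈ cones,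
      coneOf d r v σ ∩ coneOf d r v τ = coneOf d r v (σ ∩ τ))
    (hcomplete : ∀ x : Fin d → ℝ, ∃ σ ∈ cones, x ∈ coneOf d r v σ)
    (hprim : ∀ i, Finset.univ.gcd (v i) = 1)
    (a : Fin r → ℕ) (ha : ∀ i, 0 < a i)
    (ψ : (Fin d → ℝ) → ℝ)
    (hψlin : ∀ σ ∈ cones, ∃ ℓ : (Fin d → ℝ) →ₗ[ℝ] ℝ, ∀ x ∈ coneOf d r v σ, ψ x = ℓ x)
    (hψb : ∀ i, ψ (fun j => (a i : ℝ) * (v i j : ℝ)) = 1)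
    (f : ℕ → ℕ)
    (hf : ∀ m, f m = Set.ncard {w : Fin d → ℤ | ψ (fun j => (w j : ℝ)) ≤ (m : ℝ)}) :
    (∃ p : Polynomial ℚ, p.degree = d ∧ ∀ m : ℕ, 1 ≤ m → (f m : ℚ) = p.eval (m : ℚ)) ∧
    ∃ δ : Polynomial ℚ, δ.degree ≤ d ∧
      ∀ n : ℕ, (PowerSeries.coeff n)
          ((PowerSeries.mk fun m => if m = 0 then 1 else (f m : ℚ)) *
            (1 - PowerSeries.X) ^ (d + 1)) = δ.coeff n := by
  classical
  have hcard : ∀ σ ∈ cones, σ.card ≤ d := fun σ hσ => card_le_dim (hindep σ hσ)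
  have hKle : ∀ σ ∈ cones, ∀ u ∈ BoxF v a σ, KK ψ u ≤ σ.card := by
    intro σ hσ u hu
    exact (box_psi_bounds ha (hψlin σ hσ) hψb
      ((boxSet_finite v a σ).mem_toFinset.mp hu)).2.2.2
  -- the central counting identity
  have hcount : ∀ m : ℕ, f m = ∑ σ ∈ cones, ∑ u ∈ BoxF v a σ, cnt (KK ψ u) σ.card m := by
    intro m
    rw [hf m]
    have hSet : {w : Fin d → ℤ | ψ (fun j => (w j : ℝ)) ≤ (m : ℝ)}
        = ↑(cones.biUnion (fun σ => EF v a ψ σ m)) := by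
      ext w
      simp only [Set.mem_setOf_eq, Finset.coe_biUnion, Set.mem_iUnion, Finset.mem_coe]
      constructor
      · intro hw
        obtain ⟨σ, hσ, hst⟩ := exists_strict hdown hcomplete (castZ w)
        exact ⟨σ, hσ, (EF_mem_iff ha (hψlin σ hσ) hψb m w).mpr ⟨hst, hw⟩⟩
      · rintro ⟨σ, hσ, hw⟩
        exact ((EF_mem_iff ha (hψlin σ hσ) hψb m w).mp hw).2
    rw [hSet, Set.ncard_coe_finset, Finset.card_biUnion]
    · exact Finset.sum_congr rfl fun σ hσ => EF_card ha (hindep σ hσ) m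
    · intro σ hσ τ hτ hne
      rw [Function.onFun, Finset.disjoint_left]
      intro w hwσ hwτ
      have h1 := ((EF_mem_iff ha (hψlin σ hσ) hψb m w).mp hwσ).1
      have h2 := ((EF_mem_iff ha (hψlin τ hτ) hψb m w).mp hwτ).1
      exact hne (strict_unique hindep hfan hσ hτ h1 h2)
  have hf0 : f 0 = 1 := by
    rw [hf 0]
    have h := psi_zero_set ha hindep hcomplete hψlin hψb
    simp only [Nat.cast_zero]
    rw [h]
    exact Set.ncard_singleton 0
  -- the Ehrhart polynomial
  set p : Polynomial ℚ := ∑ σ ∈ cones, ∑ u ∈ BoxF v a σ, pol (KK ψ u) σ.card with hp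
  have hpeval : ∀ m : ℕ, (f m : ℚ) = p.eval (m : ℚ) := by
    intro m
    rw [hcount m, hp, Polynomial.eval_finset_sum, Nat.cast_sum]
    refine Finset.sum_congr rfl fun σ hσ => ?_
    rw [Polynomial.eval_finset_sum, Nat.cast_sum]
    refine Finset.sum_congr rfl fun u hu => ?_
    rw [pol_eval _ _ (hKle σ hσ u hu) m]
  have hpdegle : p.degree ≤ (d : ℕ) := by
    rw [Polynomial.degree_le_iff_coeff_zero]
    intro N hN
    have hdN : d < N := by exact_mod_cast hN
    rw [hp, Polynomial.finset_sum_coeff]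
    refine Finset.sum_eq_zero fun σ hσ => ?_
    rw [Polynomial.finset_sum_coeff]
    refine Finset.sum_eq_zero fun u hu => ?_
    refine Polynomial.coeff_eq_zero_of_natDegree_lt ?_
    exact lt_of_le_of_lt (le_trans (pol_natDegree_le _ _) (hcard σ hσ)) hdN
  have hpcoeffd : 0 < p.coeff d := by
    rw [hp, Polynomial.finset_sum_coeff]
    obtain ⟨σs, hσs, hcards⟩ := exists_fulldim hindep hcomplete
    refine Finset.sum_pos' (fun σ hσ => ?_) ⟨σs, hσs, ?_⟩
    · rw [Polynomial.finset_sum_coeff]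
      refine Finset.sum_nonneg fun u hu => ?_
      rw [pol_coeff _ _ d (hcard σ hσ)]
      by_cases hds : d = σ.card
      · rw [if_pos hds]
        positivity
      · rw [if_neg hds]
    · rw [Polynomial.finset_sum_coeff]
      have hBne : (BoxF v a σs).Nonempty :=
        ⟨_, (boxSet_finite v a σs).mem_toFinset.mpr (box_nonempty v a σs)⟩
      refine Finset.sum_pos (fun u hu => ?_) hBne
      rw [pol_coeff _ _ d (hcard σs hσs), if_pos hcards.symm]
      positivity
  have hpdeg : p.degree = (d : ℕ) :=
    Polynomial.degree_eq_of_le_of_coeff_ne_zero hpdegle (ne_of_gt hpcoeffd)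
  refine ⟨⟨p, hpdeg, fun m _ => hpeval m⟩, ?_⟩
  -- the delta polynomial
  set δ : Polynomial ℚ := ∑ σ ∈ cones, ∑ u ∈ BoxF v a σ,
      (Polynomial.X ^ (KK ψ u) * (1 - Polynomial.X) ^ (d - σ.card)) with hδ
  have h1X : ((1 : Polynomial ℚ) - Polynomial.X).natDegree ≤ 1 := by
    refine le_trans (Polynomial.natDegree_sub_le _ _) ?_
    simp [Polynomial.natDegree_X]
  have hδdeg : δ.degree ≤ (d : ℕ) := by
    rw [Polynomial.degree_le_iff_coeff_zero]
    intro N hN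
    have hdN : d < N := by exact_mod_cast hN
    rw [hδ, Polynomial.finset_sum_coeff]
    refine Finset.sum_eq_zero fun σ hσ => ?_
    rw [Polynomial.finset_sum_coeff]
    refine Finset.sum_eq_zero fun u hu => ?_
    refine Polynomial.coeff_eq_zero_of_natDegree_lt ?_
    have hle : (Polynomial.X ^ (KK ψ u) * (1 - Polynomial.X) ^ (d - σ.card)
        : Polynomial ℚ).natDegree ≤ KK ψ u + (d - σ.card) := by
      refine le_trans Polynomial.natDegree_mul_le ?_
      have h2 : ((1 - Polynomial.X : Polynomial ℚ) ^ (d - σ.card)).natDegree ≤ d - σ.card := by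
        refine le_trans Polynomial.natDegree_pow_le ?_
        calc (d - σ.card) * ((1 : Polynomial ℚ) - Polynomial.X).natDegree
            ≤ (d - σ.card) * 1 := Nat.mul_le_mul_left _ h1X
          _ = d - σ.card := Nat.mul_one _
      have h3 : ((Polynomial.X : Polynomial ℚ) ^ (KK ψ u)).natDegree = KK ψ u :=
        Polynomial.natDegree_X_pow _
      omega
    have hKc := hKle σ hσ u hu
    have hcd := hcard σ hσ
    omega
  refine ⟨δ, hδdeg, ?_⟩
  -- power series computation
  have hser : (PowerSeries.mk fun m => if m = 0 then (1 : ℚ) else (f m : ℚ))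
      = ∑ σ ∈ cones, ∑ u ∈ BoxF v a σ,
          PowerSeries.mk (fun m => (cnt (KK ψ u) σ.card m : ℚ)) := by
    ext nn
    rw [PowerSeries.coeff_mk, map_sum]
    have hrhs : ∑ σ ∈ cones, (PowerSeries.coeff nn)
          (∑ u ∈ BoxF v a σ, PowerSeries.mk (fun m => (cnt (KK ψ u) σ.card m : ℚ)))
        = ((f nn : ℕ) : ℚ) := by
      rw [hcount nn]
      push_cast
      refine Finset.sum_congr rfl fun σ hσ => ?_
      rw [map_sum]
      refine Finset.sum_congr rfl fun u hu => ?_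
      rw [PowerSeries.coeff_mk]
    rw [hrhs]
    by_cases h : nn = 0
    · subst h
      rw [if_pos rfl, hf0]
      norm_num
    · rw [if_neg h]
  intro n
  rw [hser, Finset.sum_mul]
  have hterm : ∀ σ ∈ cones, (∑ u ∈ BoxF v a σ,
        PowerSeries.mk (fun m => (cnt (KK ψ u) σ.card m : ℚ))) * (1 - PowerSeries.X) ^ (d + 1)
      = ∑ u ∈ BoxF v a σ, PowerSeries.X ^ (KK ψ u) * (1 - PowerSeries.X) ^ (d - σ.card) := by
    intro σ hσ
    rw [Finset.sum_mul]
    exact Finset.sum_congr rfl fun u hu => cnt_series_mul _ _ _ (hcard σ hσ)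
  rw [Finset.sum_congr rfl hterm]
  have hcoe : ((δ : Polynomial ℚ) : PowerSeries ℚ)
      = ∑ σ ∈ cones, ∑ u ∈ BoxF v a σ,
          PowerSeries.X ^ (KK ψ u) * (1 - PowerSeries.X) ^ (d - σ.card) := by
    rw [hδ, ← Polynomial.coeToPowerSeries.ringHom_apply, map_sum]
    refine Finset.sum_congr rfl fun σ hσ => ?_
    rw [map_sum]
    refine Finset.sum_congr rfl fun u hu => ?_
    simp only [Polynomial.coeToPowerSeries.ringHom_apply, Polynomial.coe_mul, Polynomial.coe_pow,
      Polynomial.coe_sub, Polynomial.coe_one, Polynomial.coe_X]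
  rw [← hcoe, Polynomial.coeff_coe]
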